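/- arXiv:2209.07807 — 2 statements merged into one kernel-verified Lean document; each statement's English description precedes it below -/
import Mathlib

section
/- Let d ≥ 1, let f : ℝᵈ → ℝ be differentiable with gradient ∇f Lipschitz continuous with constant L₂, let μ > 0, and define f_μ(a) = E_{v∼U_b}[f(a + μ·v)]. Then f_μ is differentiable, its gradient satisfies ∇f_μ(a) = E_{v∼U_b}[∇f(a + μ·v)] for every a ∈ ℝᵈ, and ∇f_μ is Lipschitz continuous with the same constant L₂. -/
open MeasureTheory

/-- The uniform probability measure on the closed unit Euclidean ball in `ℝᵈ`:
Lebesgue measure restricted to the ball, normalized to total mass one. -/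
noncomputable def ballUniform (d : ℕ) : Measure (EuclideanSpace ℝ (Fin d)) :=
  (volume (Metric.closedBall (0 : EuclideanSpace ℝ (Fin d)) 1))⁻¹ •
    volume.restrict (Metric.closedBall (0 : EuclideanSpace ℝ (Fin d)) 1)

lemma ballUniform_vol_ne_zero (d : ℕ) :
    volume (Metric.closedBall (0 : EuclideanSpace ℝ (Fin d)) 1) ≠ 0 :=
  (Metric.measure_closedBall_pos volume (0 : EuclideanSpace ℝ (Fin d)) one_pos).ne'

lemma ballUniform_vol_ne_top (d : ℕ) :
    volume (Metric.closedBall (0 : EuclideanSpace ℝ (Fin d)) 1) ≠ ⊤ :=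
  (MeasureTheory.measure_closedBall_lt_top).ne

instance ballUniform_isProb (d : ℕ) : IsProbabilityMeasure (ballUniform d) := by
  constructor
  rw [ballUniform, Measure.smul_apply, Measure.restrict_apply MeasurableSet.univ,
    Set.univ_inter, smul_eq_mul]
  exact ENNReal.inv_mul_cancel (ballUniform_vol_ne_zero d) (ballUniform_vol_ne_top d)

lemma integrable_ballUniform {d : ℕ} {E : Type*} [NormedAddCommGroup E]
    {g : EuclideanSpace ℝ (Fin d) → E} (hg : Continuous g) :
    Integrable g (ballUniform d) := by
  rw [ballUniform]
  refine Integrable.smul_measure ?_ (ENNReal.inv_ne_top.2 (ballUniform_vol_ne_zero d))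
  exact hg.continuousOn.integrableOn_compact (isCompact_closedBall _ _)

/-- Lemma 2, part 2: if `f : ℝᵈ → ℝ` is differentiable with `L₂`-Lipschitz gradient
and `μ > 0`, then the ball-smoothing `f_μ(a) = E_{v ∼ U_b}[f(a + μ v)]` is
differentiable, its gradient is `∇f_μ(a) = E_{v ∼ U_b}[∇f(a + μ v)]`, and
`∇f_μ` is `L₂`-Lipschitz. -/
theorem ballSmoothing_gradient_lipschitz
    (d : ℕ) (hd : 1 ≤ d) (f : EuclideanSpace ℝ (Fin d) → ℝ)
    (hdiff : Differentiable ℝ f)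
    (L₂ : NNReal) (hgrad : LipschitzWith L₂ (gradient f))
    (μ : ℝ) (hμ : 0 < μ)
    (fμ : EuclideanSpace ℝ (Fin d) → ℝ)
    (hfμ : ∀ a, fμ a = ∫ v, f (a + μ • v) ∂(ballUniform d)) :
    Differentiable ℝ fμ ∧
      (∀ a, gradient fμ a = ∫ v, gradient f (a + μ • v) ∂(ballUniform d)) ∧
      LipschitzWith L₂ (gradient fμ) := by
  have hfμ' : fμ = fun a => ∫ v, f (a + μ • v) ∂(ballUniform d) := funext hfμ
  subst hfμ'
  set ν := ballUniform d with hν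
  have hfc : Continuous f := hdiff.continuous
  have hgradc : Continuous (gradient f) := hgrad.continuous
  -- fderiv is Lipschitz with the same constant
  have hgradeq : ∀ x : EuclideanSpace ℝ (Fin d), fderiv ℝ f x = (InnerProductSpace.toDual ℝ (EuclideanSpace ℝ (Fin d))) (gradient f x) := by
    intro x
    rw [gradient, LinearIsometryEquiv.apply_symm_apply]
  have hfd : LipschitzWith L₂ (fun x => fderiv ℝ f x) := by
    refine LipschitzWith.of_dist_le_mul fun x y => ?_
    rw [hgradeq x, hgradeq y,
      (InnerProductSpace.toDual ℝ (EuclideanSpace ℝ (Fin d))).isometry.dist_eq]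
    exact hgrad.dist_le_mul x y
  have hcont_aux : ∀ x : EuclideanSpace ℝ (Fin d), Continuous (fun v : EuclideanSpace ℝ (Fin d) => x + μ • v) := fun x =>
    continuous_const.add (continuous_id.const_smul μ)
  -- key differentiation under the integral
  have key : ∀ x₀ : EuclideanSpace ℝ (Fin d), HasFDerivAt (fun x => ∫ v, f (x + μ • v) ∂ν)
      (∫ v, fderiv ℝ f (x₀ + μ • v) ∂ν) x₀ := by
    intro x₀
    refine hasFDerivAt_integral_of_dominated_of_fderiv_le
      (F' := fun x v => fderiv ℝ f (x + μ • v))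
      (bound := fun v => ‖fderiv ℝ f (x₀ + μ • v)‖ + L₂)
      (Metric.ball_mem_nhds x₀ one_pos) ?_ ?_ ?_ ?_ ?_ ?_
    · filter_upwards with x
      exact (hfc.comp (hcont_aux x)).aestronglyMeasurable
    · exact integrable_ballUniform (hfc.comp (hcont_aux x₀))
    · exact (hfd.continuous.comp (hcont_aux x₀)).aestronglyMeasurable
    · refine Filter.Eventually.of_forall fun v x hx => ?_
      have h1 : dist (fderiv ℝ f (x + μ • v)) (fderiv ℝ f (x₀ + μ • v))
          ≤ L₂ * dist (x + μ • v) (x₀ + μ • v) := hfd.dist_le_mul _ _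
      have h2 : dist (x + μ • v) (x₀ + μ • v) = dist x x₀ := dist_add_right x x₀ (μ • v)
      have h3 : dist x x₀ ≤ 1 := le_of_lt (Metric.mem_ball.mp hx)
      calc ‖fderiv ℝ f (x + μ • v)‖
          ≤ ‖fderiv ℝ f (x₀ + μ • v)‖ + dist (fderiv ℝ f (x + μ • v)) (fderiv ℝ f (x₀ + μ • v)) := by
            rw [dist_eq_norm]
            exact norm_le_insert' _ _
        _ ≤ ‖fderiv ℝ f (x₀ + μ • v)‖ + L₂ * 1 := by
            refine add_le_add le_rfl ?_
            refine h1.trans ?_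
            rw [h2]
            exact mul_le_mul_of_nonneg_left h3 L₂.2
        _ = ‖fderiv ℝ f (x₀ + μ • v)‖ + L₂ := by ring
    · exact integrable_ballUniform
        (((hfd.continuous.comp (hcont_aux x₀)).norm).add continuous_const)
    · refine Filter.Eventually.of_forall fun v x _ => ?_
      have h := ((hdiff (x + μ • v)).hasFDerivAt).comp x ((hasFDerivAt_id x).add_const (μ • v))
      simpa [Function.comp_def] using h
  have hdiffμ : Differentiable ℝ (fun a => ∫ v, f (a + μ • v) ∂ν) :=
    fun x => (key x).differentiableAt
  have hgradμ : ∀ a : EuclideanSpace ℝ (Fin d), gradient (fun a => ∫ v, f (a + μ • v) ∂ν) a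
      = ∫ v, gradient f (a + μ • v) ∂ν := by
    intro a
    have h2 : fderiv ℝ (fun a => ∫ v, f (a + μ • v) ∂ν) a
        = ∫ v, fderiv ℝ f (a + μ • v) ∂ν := (key a).fderiv
    rw [gradient, h2]
    have : ∀ v : EuclideanSpace ℝ (Fin d), fderiv ℝ f (a + μ • v)
        = (InnerProductSpace.toDual ℝ (EuclideanSpace ℝ (Fin d))).toLinearIsometry (gradient f (a + μ • v)) :=
      fun v => hgradeq _
    simp_rw [this]
    rw [LinearIsometry.integral_comp_comm]
    simp
    exact LinearIsometryEquiv.symm_apply_apply _ _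
  refine ⟨hdiffμ, hgradμ, ?_⟩
  have hgradint : ∀ x : EuclideanSpace ℝ (Fin d), Integrable (fun v => gradient f (x + μ • v)) ν :=
    fun x => integrable_ballUniform (hgradc.comp (hcont_aux x))
  refine LipschitzWith.of_dist_le_mul fun x y => ?_
  rw [hgradμ x, hgradμ y, dist_eq_norm, ← integral_sub (hgradint x) (hgradint y)]
  have hb : ∀ v : EuclideanSpace ℝ (Fin d), ‖gradient f (x + μ • v) - gradient f (y + μ • v)‖ ≤ L₂ * dist x y := by
    intro v
    rw [← dist_eq_norm]
    calc dist (gradient f (x + μ • v)) (gradient f (y + μ • v))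
        ≤ L₂ * dist (x + μ • v) (y + μ • v) := hgrad.dist_le_mul _ _
      _ = L₂ * dist x y := by rw [dist_add_right]
  calc ‖∫ v, (gradient f (x + μ • v) - gradient f (y + μ • v)) ∂ν‖
      ≤ (L₂ * dist x y) * (ν Set.univ).toReal :=
        norm_integral_le_of_norm_le_const (Filter.Eventually.of_forall hb)
    _ = L₂ * dist x y := by simp
end

section
/- Let d ≥ 1, let f : ℝᵈ → ℝ be Lipschitz continuous, let μ > 0, and define f_μ(a) = E_{v∼U_b}[f(a + μ·v)]. Then f_μ is differentiable at every a ∈ ℝᵈ and its gradient is given by the sphere integral ∇f_μ(a) = (d/μ) · ∫_{S^{d−1}} f(a + μ·u) · u dσ(u), where σ is the uniform probability measure on the unit Euclidean sphere S^{d−1} ⊂ ℝᵈ. -/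
open MeasureTheory

/-- The uniform (rotation-invariant) probability measure on the unit Euclidean
sphere `S^{d-1} ⊂ ℝᵈ`: the surface measure induced by Lebesgue measure,
normalized to total mass one. -/
noncomputable def sphereUniform (d : ℕ) :
    Measure (Metric.sphere (0 : EuclideanSpace ℝ (Fin d)) 1) :=
  ((volume : Measure (EuclideanSpace ℝ (Fin d))).toSphere Set.univ)⁻¹ •
    (volume : Measure (EuclideanSpace ℝ (Fin d))).toSphere


open Set Metric
open scoped RealInnerProductSpace

section RhoLemmas
variable {E : Type*} [NormedAddCommGroup E] [InnerProductSpace ℝ E]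

noncomputable def rho (η u : E) : ℝ := ⟪u, η⟫ + Real.sqrt (1 - ‖η‖^2 + ⟪u, η⟫^2)

lemma rho_zero (u : E) : rho 0 u = 1 := by simp [rho]

lemma rho_facts {η u : E} (hη : ‖η‖ ≤ 1/4) (hu : ‖u‖ = 1) :
    |rho η u - 1 - ⟪u, η⟫| ≤ ‖η‖^2 ∧ |rho η u - 1| ≤ 2 * ‖η‖ ∧
      (∀ r : ℝ, 0 < r → (‖r • u - η‖ ≤ 1 ↔ r ≤ rho η u)) := by
  set b := ⟪u, η⟫ with hb
  have hb1 : |b| ≤ ‖η‖ := by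
    calc |b| ≤ ‖u‖ * ‖η‖ := abs_real_inner_le_norm u η
    _ = ‖η‖ := by rw [hu, one_mul]
  have hηnn : (0:ℝ) ≤ ‖η‖ := norm_nonneg _
  have hb2 : b^2 ≤ ‖η‖^2 := by nlinarith [abs_nonneg b, sq_abs b]
  have harg : (0:ℝ) ≤ 1 - ‖η‖^2 + b^2 := by nlinarith
  set s := Real.sqrt (1 - ‖η‖^2 + b^2) with hs
  have hs0 : 0 ≤ s := Real.sqrt_nonneg _
  have hs2 : s^2 = 1 - ‖η‖^2 + b^2 := Real.sq_sqrt harg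
  have h1 : |s - 1| ≤ ‖η‖^2 := by
    rw [abs_le]
    constructor
    · nlinarith
    · nlinarith
  have key : |rho η u - 1 - b| ≤ ‖η‖^2 := by
    have : rho η u - 1 - b = s - 1 := by rw [rho]; ring
    rwa [this]
  refine ⟨key, ?_, ?_⟩
  · have := abs_sub_abs_le_abs_sub (rho η u - 1) b
    have h3 : |rho η u - 1| ≤ |b| + ‖η‖^2 := by
      have := abs_sub (rho η u - 1 - b) (-b)
      calc |rho η u - 1| = |(rho η u - 1 - b) + b| := by ring_nf
      _ ≤ |rho η u - 1 - b| + |b| := abs_add_le _ _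
      _ ≤ |b| + ‖η‖^2 := by linarith
    nlinarith
  · intro r hr
    have hnorm : ‖r • u - η‖^2 = r^2 - 2*r*b + ‖η‖^2 := by
      rw [norm_sub_sq_real, norm_smul, real_inner_smul_left]
      simp [hu, abs_of_pos hr]
      ring
    have hsb : |b| < s := by nlinarith
    constructor
    · intro h
      have h2 : ‖r • u - η‖^2 ≤ 1 := by nlinarith [norm_nonneg (r • u - η)]
      rw [hnorm] at h2
      rw [rho, ← hb, ← hs]
      nlinarith [neg_abs_le b, le_abs_self b]
    · intro h
      rw [rho, ← hb, ← hs] at h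
      have h2 : ‖r • u - η‖^2 ≤ 1 := by
        rw [hnorm]
        nlinarith [neg_abs_le b, le_abs_self b]
      nlinarith [norm_nonneg (r • u - η), sq_abs (‖r • u - η‖), abs_of_nonneg (norm_nonneg (r • u - η))]

end RhoLemmas

lemma ftc_bound {ψ : ℝ → ℝ} (hψ : Continuous ψ) {K ρ : ℝ}
    (hK : ∀ r ∈ Icc (1/2 : ℝ) (3/2), |ψ r - ψ 1| ≤ K * |r - 1|)
    (hρ : ρ ∈ Icc (1/2 : ℝ) (3/2)) :
    |(∫ r in (0:ℝ)..ρ, ψ r) - (∫ r in (0:ℝ)..1, ψ r) - ψ 1 * (ρ - 1)| ≤ K * (ρ-1)^2 := by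
  have hint : ∀ a b : ℝ, IntervalIntegrable ψ volume a b := fun a b => hψ.intervalIntegrable a b
  have hsplit : (∫ r in (0:ℝ)..ρ, ψ r) - (∫ r in (0:ℝ)..1, ψ r) = ∫ r in (1:ℝ)..ρ, ψ r := by
    rw [← intervalIntegral.integral_add_adjacent_intervals (hint 0 1) (hint 1 ρ)]
    ring
  rw [hsplit]
  have hconst : ψ 1 * (ρ - 1) = ∫ r in (1:ℝ)..ρ, ψ 1 := by
    rw [intervalIntegral.integral_const, smul_eq_mul]; ring
  rw [hconst, ← intervalIntegral.integral_sub (hint 1 ρ) (intervalIntegrable_const)]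
  have := intervalIntegral.norm_integral_le_of_norm_le_const
    (f := fun r => ψ r - ψ 1) (a := 1) (b := ρ) (C := K * |ρ - 1|) ?_
  · calc |∫ r in (1:ℝ)..ρ, (ψ r - ψ 1)| ≤ K * |ρ - 1| * |ρ - 1| := this
    _ = K * (ρ-1)^2 := by rw [mul_assoc, ← abs_mul, ← sq, abs_sq]
  · intro x hx
    rw [Set.uIoc] at hx
    have hx1 : min 1 ρ < x := hx.1
    have hx2 : x ≤ max 1 ρ := hx.2
    have hxI : x ∈ Icc (1/2:ℝ) (3/2) := by
      constructor
      · rcases le_total 1 ρ with h | h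
        · simp [min_eq_left h] at hx1; linarith
        · have : (1/2:ℝ) ≤ min 1 ρ := le_min (by norm_num) hρ.1; linarith
      · rcases le_total 1 ρ with h | h
        · have : max 1 ρ ≤ 3/2 := max_le (by norm_num) hρ.2; linarith
        · have : max 1 ρ ≤ 3/2 := max_le (by norm_num) hρ.2; linarith
    have hxd : |x - 1| ≤ |ρ - 1| := by
      rcases le_total 1 ρ with h | h
      · rw [min_eq_left h] at hx1
        rw [abs_of_nonneg (by linarith), abs_of_nonneg (by linarith)]
        have := hx2; rw [max_eq_right h] at this; linarith
      · rw [min_eq_right h] at hx1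
        rw [max_eq_left h] at hx2
        rw [abs_of_nonpos (by linarith), abs_of_nonpos (by linarith)]
        linarith
    calc ‖ψ x - ψ 1‖ = |ψ x - ψ 1| := rfl
    _ ≤ K * |x - 1| := hK x hxI
    _ ≤ K * |ρ - 1| := by
        have hK0 : 0 ≤ K := by
          have := hK 1 (by norm_num); simp at this
          by_contra hneg
          push_neg at hneg
          have h2 := hK (3/2) (by norm_num)
          have : (0:ℝ) ≤ K * |(3/2:ℝ) - 1| := le_trans (abs_nonneg _) h2
          rw [show |(3/2:ℝ) - 1| = 1/2 by norm_num] at this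
          linarith
        exact mul_le_mul_of_nonneg_left hxd hK0

lemma pow_near_one {n : ℕ} {r : ℝ} (h0 : 0 ≤ r) (h2 : r ≤ 2) :
    |r^n - 1| ≤ n * 2^n * |r - 1| := by
  induction n with
  | zero => simp
  | succ n ih =>
    have habs : |r| ≤ 2 := by rw [abs_of_nonneg h0]; exact h2
    calc |r^(n+1) - 1| = |r^n * (r - 1) + (r^n - 1)| := by ring_nf
    _ ≤ |r^n * (r-1)| + |r^n - 1| := abs_add_le _ _
    _ ≤ 2^n * |r-1| + n * 2^n * |r-1| := by
        refine add_le_add ?_ ih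
        rw [abs_mul, abs_pow]
        exact mul_le_mul_of_nonneg_right (pow_le_pow_left₀ (abs_nonneg r) habs n) (abs_nonneg _)
    _ ≤ ((n:ℝ)+1) * 2^(n+1) * |r-1| := by
        have h1 : (0:ℝ) ≤ |r-1| := abs_nonneg _
        have h2n : (0:ℝ) ≤ 2^n := by positivity
        have hn0 : (0:ℝ) ≤ (n:ℝ) := Nat.cast_nonneg n
        have hpow : (2:ℝ)^(n+1) = 2 * 2^n := by ring
        rw [hpow]
        nlinarith [mul_nonneg h2n h1, mul_nonneg hn0 (mul_nonneg h2n h1)]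
    _ = ((n+1:ℕ):ℝ) * 2^(n+1) * |r-1| := by push_cast; ring

lemma polar_id {d : ℕ} (hd : 1 ≤ d) (F : EuclideanSpace ℝ (Fin d) → ℝ) :
    ∫ x, F x = ∫ p : sphere (0 : EuclideanSpace ℝ (Fin d)) 1 × Ioi (0:ℝ),
      F (p.2.1 • p.1.1) ∂((volume : Measure (EuclideanSpace ℝ (Fin d))).toSphere.prod
        (Measure.volumeIoiPow (d - 1))) := by
  haveI : Nontrivial (EuclideanSpace ℝ (Fin d)) :=
    Module.nontrivial_of_finrank_pos (by rw [finrank_euclideanSpace_fin]; omega)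
  have h1 : ∫ x, F x ∂(volume : Measure (EuclideanSpace ℝ (Fin d)))
      = ∫ x : ({(0 : EuclideanSpace ℝ (Fin d))}ᶜ : Set _), F x.1
          ∂((volume : Measure (EuclideanSpace ℝ (Fin d))).comap Subtype.val) := by
    rw [integral_subtype_comap (measurableSet_singleton _).compl fun x ↦ F x,
      restrict_compl_singleton]
  have h2 := (Measure.measurePreserving_homeomorphUnitSphereProd
    (volume : Measure (EuclideanSpace ℝ (Fin d)))).integral_comp
    (Homeomorph.measurableEmbedding _) (fun p => F (p.2.1 • p.1.1))
  rw [finrank_euclideanSpace_fin] at h2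
  rw [h1, ← h2]
  refine integral_congr_ae (Filter.Eventually.of_forall fun x => ?_)
  simp only [homeomorphUnitSphereProd_apply_fst_coe, homeomorphUnitSphereProd_apply_snd_coe,
    Function.comp_apply]
  rw [smul_inv_smul₀ (norm_ne_zero_iff.2 x.2)]

lemma volumeIoiPow_integral (n : ℕ) (g : ℝ → ℝ) :
    ∫ r : Ioi (0:ℝ), g r.1 ∂(Measure.volumeIoiPow n) = ∫ r in Ioi (0:ℝ), r ^ n • g r := by
  simp only [Measure.volumeIoiPow, ENNReal.ofReal]
  rw [integral_withDensity_eq_integral_smul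
      ((measurable_subtype_coe.pow_const _).real_toNNReal),
    integral_subtype_comap measurableSet_Ioi fun a ↦ Real.toNNReal (a ^ n) • g a,
    setIntegral_congr_fun measurableSet_Ioi fun x hx ↦ ?_]
  rw [NNReal.smul_def, Real.coe_toNNReal _ (pow_nonneg hx.out.le _)]

lemma I_repr {d : ℕ} (hd : 1 ≤ d) (φ : EuclideanSpace ℝ (Fin d) → ℝ) (hφc : Continuous φ)
    (η : EuclideanSpace ℝ (Fin d)) (hη : ‖η‖ ≤ 1/4) :
    (∫ x, (closedBall η 1).indicator φ x) =
      (∫ u : sphere (0 : EuclideanSpace ℝ (Fin d)) 1,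
        (∫ r in (0:ℝ)..(rho η u.1), r^(d-1) * φ (r • u.1))
          ∂((volume : Measure (EuclideanSpace ℝ (Fin d))).toSphere))
    ∧ Integrable (fun u : sphere (0 : EuclideanSpace ℝ (Fin d)) 1 =>
        ∫ r in (0:ℝ)..(rho η u.1), r^(d-1) * φ (r • u.1))
        ((volume : Measure (EuclideanSpace ℝ (Fin d))).toSphere) := by
  set F : EuclideanSpace ℝ (Fin d) → ℝ := (closedBall η 1).indicator φ with hF
  set σ' := (volume : Measure (EuclideanSpace ℝ (Fin d))).toSphere with hσ'
  set ν := Measure.volumeIoiPow (d - 1) with hν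
  -- bound on φ over closedBall 0 2
  obtain ⟨M, hM⟩ : ∃ M : ℝ, ∀ x ∈ closedBall (0 : EuclideanSpace ℝ (Fin d)) 2, |φ x| ≤ M := by
    obtain ⟨M, hM⟩ := (isCompact_closedBall (0 : EuclideanSpace ℝ (Fin d)) 2).exists_bound_of_continuousOn
      hφc.continuousOn
    exact ⟨M, fun x hx => by simpa [Real.norm_eq_abs] using hM x hx⟩
  have hM0 : 0 ≤ M := le_trans (abs_nonneg _) (hM 0 (by simp))
  -- measurability
  have hFm : StronglyMeasurable F :=
    hφc.stronglyMeasurable.indicator measurableSet_closedBall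
  have hmap : Measurable (fun p : sphere (0 : EuclideanSpace ℝ (Fin d)) 1 × Ioi (0:ℝ) => p.2.1 • p.1.1) :=
    ((continuous_subtype_val.comp continuous_snd).smul
      (continuous_subtype_val.comp continuous_fst)).measurable
  -- integrability on the product
  have hGint : Integrable (fun p : sphere (0 : EuclideanSpace ℝ (Fin d)) 1 × Ioi (0:ℝ) => F (p.2.1 • p.1.1))
      (σ'.prod ν) := by
    have hSm : MeasurableSet {p : sphere (0 : EuclideanSpace ℝ (Fin d)) 1 × Ioi (0:ℝ) | p.2.1 ≤ 2} :=
      ((continuous_subtype_val.comp continuous_snd).measurable) measurableSet_Iic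
    have hSfin : (σ'.prod ν) {p : sphere (0 : EuclideanSpace ℝ (Fin d)) 1 × Ioi (0:ℝ) | p.2.1 ≤ 2} < ⊤ := by
      have hset : {p : sphere (0 : EuclideanSpace ℝ (Fin d)) 1 × Ioi (0:ℝ) | p.2.1 ≤ 2}
          = (univ : Set (sphere (0 : EuclideanSpace ℝ (Fin d)) 1)) ×ˢ {r : Ioi (0:ℝ) | r.1 ≤ 2} := by
        ext p; simp [Set.mem_prod]
      rw [hset, Measure.prod_prod]
      have h1 : σ' univ < ⊤ := measure_lt_top _ _
      have h2 : ν {r : Ioi (0:ℝ) | r.1 ≤ 2} < ⊤ := by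
        have hsub : {r : Ioi (0:ℝ) | r.1 ≤ 2} ⊆ Iio (⟨3, by norm_num⟩ : Ioi (0:ℝ)) := by
          intro r hr
          simp only [mem_Iio, Subtype.mk_lt_mk, ← Subtype.coe_lt_coe]
          exact lt_of_le_of_lt hr (by norm_num)
        refine lt_of_le_of_lt (measure_mono hsub) ?_
        rw [hν, Measure.volumeIoiPow_apply_Iio]
        exact ENNReal.ofReal_lt_top
      exact ENNReal.mul_lt_top h1 h2
    refine Integrable.mono'
      (g := ({p : sphere (0 : EuclideanSpace ℝ (Fin d)) 1 × Ioi (0:ℝ) |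
        p.2.1 ≤ 2}).indicator (fun _ => M))
      (integrable_indicator_iff hSm |>.2 ?_)
      (hFm.comp_measurable hmap).aestronglyMeasurable
      (Filter.Eventually.of_forall fun p => ?_)
    · exact integrableOn_const hSfin.ne
    · by_cases hc : p.2.1 ≤ 2
      · have hcm : ({p : sphere (0 : EuclideanSpace ℝ (Fin d)) 1 × Ioi (0:ℝ) |
            p.2.1 ≤ 2}).indicator (fun _ => M) p = M := Set.indicator_of_mem (show p ∈ {p : sphere (0 : EuclideanSpace ℝ (Fin d)) 1 × Ioi (0:ℝ) | p.2.1 ≤ 2} from hc) _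
        rw [hcm]
        by_cases hmem : p.2.1 • p.1.1 ∈ closedBall η 1
        · rw [hF, Set.indicator_of_mem hmem]
          refine hM _ ?_
          have h1 : ‖p.2.1 • p.1.1 - η‖ ≤ 1 := by
            rwa [mem_closedBall, dist_eq_norm] at hmem
          have h2 : ‖p.2.1 • p.1.1‖ ≤ ‖p.2.1 • p.1.1 - η‖ + ‖η‖ := by
            simpa using norm_add_le (p.2.1 • p.1.1 - η) η
          rw [mem_closedBall, dist_zero_right]
          linarith
        · rw [hF, Set.indicator_of_notMem hmem]; simpa using hM0
      · have hcm : ({p : sphere (0 : EuclideanSpace ℝ (Fin d)) 1 × Ioi (0:ℝ) |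
            p.2.1 ≤ 2}).indicator (fun _ => M) p = 0 := Set.indicator_of_notMem (show p ∉ {p : sphere (0 : EuclideanSpace ℝ (Fin d)) 1 × Ioi (0:ℝ) | p.2.1 ≤ 2} from hc) _
        rw [hcm]
        push_neg at hc
        have hnot : p.2.1 • p.1.1 ∉ closedBall η 1 := by
          rw [mem_closedBall, dist_eq_norm]
          push_neg
          have hn : ‖p.2.1 • p.1.1‖ = p.2.1 := by
            rw [norm_smul, Real.norm_eq_abs, abs_of_pos p.2.2,
              mem_sphere_zero_iff_norm.1 p.1.2, mul_one]
          have : ‖p.2.1 • p.1.1‖ - ‖η‖ ≤ ‖p.2.1 • p.1.1 - η‖ :=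
            norm_sub_norm_le _ _
          rw [hn] at this
          linarith
        rw [hF, Set.indicator_of_notMem hnot]
        simp
  -- pointwise inner integral computation
  have hinner : ∀ u : sphere (0 : EuclideanSpace ℝ (Fin d)) 1,
      (∫ r : Ioi (0:ℝ), F (r.1 • u.1) ∂ν) = ∫ r in (0:ℝ)..(rho η u.1), r^(d-1) * φ (r • u.1) := by
    intro u
    have hu : ‖u.1‖ = 1 := mem_sphere_zero_iff_norm.1 u.2
    obtain ⟨h1, h2, h3⟩ := rho_facts hη hu
    have hρpos : (0:ℝ) ≤ rho η u.1 := by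
      have := abs_le.1 h2
      have : -(2 * ‖η‖) ≤ rho η u.1 - 1 := this.1
      have hn : ‖η‖ ≤ 1/4 := hη
      linarith
    rw [volumeIoiPow_integral (d-1) (fun t => F (t • u.1))]
    have hcong : EqOn (fun r : ℝ => r ^ (d-1) • F (r • u.1))
        ((Ioc (0:ℝ) (rho η u.1)).indicator (fun r => r^(d-1) * φ (r • u.1))) (Ioi 0) := by
      intro r hr
      have hrpos : 0 < r := hr
      by_cases hle : r ≤ rho η u.1
      · have hmem : r • u.1 ∈ closedBall η 1 := by
          rw [mem_closedBall, dist_eq_norm]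
          exact (h3 r hrpos).2 hle
        rw [Set.indicator_of_mem (by exact ⟨hrpos, hle⟩ : r ∈ Ioc (0:ℝ) (rho η u.1))]
        simp only [hF, Set.indicator_of_mem hmem, smul_eq_mul]
      · have hmem : r • u.1 ∉ closedBall η 1 := by
          rw [mem_closedBall, dist_eq_norm]
          intro hcon
          exact hle ((h3 r hrpos).1 hcon)
        rw [Set.indicator_of_notMem (fun hc => hle hc.2)]
        simp only [hF, Set.indicator_of_notMem hmem, smul_eq_mul, mul_zero]
    rw [setIntegral_congr_fun measurableSet_Ioi hcong]
    rw [← integral_indicator measurableSet_Ioi, Set.indicator_indicator,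
      Set.inter_eq_self_of_subset_right Ioc_subset_Ioi_self,
      integral_indicator measurableSet_Ioc, intervalIntegral.integral_of_le hρpos]
  constructor
  · rw [polar_id hd F, integral_prod _ hGint]
    exact integral_congr_ae (Filter.Eventually.of_forall fun u => hinner u)
  · exact (hGint.integral_prod_left).congr
      (Filter.Eventually.of_forall fun u => hinner u)

set_option maxHeartbeats 2000000 in
/-- Lemma 2 (after Flaxman et al.): for Lipschitz `f : ℝᵈ → ℝ` and `μ > 0`, the
ball-smoothing `f_μ(a) = E_{v ∼ U_b}[f(a + μ v)]` is differentiable everywhere with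
gradient given by the sphere integral `∇f_μ(a) = (d/μ) ∫_{S^{d-1}} f(a + μ u) u dσ(u)`. -/
theorem ballSmoothing_hasGradient_sphere_integral
    (d : ℕ) (hd : 1 ≤ d) (f : EuclideanSpace ℝ (Fin d) → ℝ)
    (L₁ : NNReal) (hf : LipschitzWith L₁ f)
    (μ : ℝ) (hμ : 0 < μ)
    (fμ : EuclideanSpace ℝ (Fin d) → ℝ)
    (hfμ : ∀ a, fμ a = ∫ v, f (a + μ • v) ∂(ballUniform d)) :
    ∀ a : EuclideanSpace ℝ (Fin d),
      HasGradientAt fμ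
        (((d : ℝ) / μ) •
          ∫ u, f (a + μ • (u : EuclideanSpace ℝ (Fin d))) • (u : EuclideanSpace ℝ (Fin d))
            ∂(sphereUniform d)) a := by
  intro a
  haveI : Nontrivial (EuclideanSpace ℝ (Fin d)) :=
    Module.nontrivial_of_finrank_pos (R := ℝ)
      (by rw [finrank_euclideanSpace_fin]; omega)
  set σ' := (volume : Measure (EuclideanSpace ℝ (Fin d))).toSphere with hσ'
  set φ : EuclideanSpace ℝ (Fin d) → ℝ := fun x => f (a + μ • x) with hφ
  have hφc : Continuous φ := hf.continuous.comp (continuous_const.add (continuous_id.const_smul μ))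
  set L : ℝ := (L₁ : ℝ) * μ with hLdef
  have hL0 : 0 ≤ L := mul_nonneg L₁.2 hμ.le
  have hφL : ∀ x y, |φ x - φ y| ≤ L * ‖x - y‖ := by
    intro x y
    have := hf.dist_le_mul (a + μ • x) (a + μ • y)
    rw [dist_eq_norm, dist_eq_norm] at this
    have heq : a + μ • x - (a + μ • y) = μ • (x - y) := by
      rw [smul_sub]; abel
    rw [heq, norm_smul μ (x - y), Real.norm_eq_abs μ, abs_of_pos hμ] at this
    calc |φ x - φ y| = ‖f (a + μ • x) - f (a + μ • y)‖ := rfl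
    _ ≤ L₁ * (μ * ‖x - y‖) := this
    _ = L * ‖x - y‖ := by rw [hLdef]; ring
  set M : ℝ := |φ 0| + 2 * L with hMdef
  have hM0 : 0 ≤ M := by positivity
  have hMb : ∀ x : EuclideanSpace ℝ (Fin d), ‖x‖ ≤ 2 → |φ x| ≤ M := by
    intro x hx
    have h1 := hφL x 0
    rw [sub_zero] at h1
    have : |φ x| - |φ 0| ≤ |φ x - φ 0| := abs_sub_abs_le_abs_sub _ _
    have hLx : L * ‖x‖ ≤ L * 2 := mul_le_mul_of_nonneg_left hx hL0
    rw [hMdef]; linarith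
  set K : ℝ := L * 2^d + M * (d * 2^d) with hKdef
  have hK0 : 0 ≤ K := by positivity
  -- Lipschitz-type bound for ψ_u
  have hψK : ∀ u : EuclideanSpace ℝ (Fin d), ‖u‖ = 1 →
      ∀ r ∈ Icc (1/2 : ℝ) (3/2),
        |r^(d-1) * φ (r • u) - 1^(d-1) * φ ((1:ℝ) • u)| ≤ K * |r - 1| := by
    intro u hu r hr
    have hr0 : (0:ℝ) ≤ r := by linarith [hr.1]
    have hr2 : r ≤ 2 := by linarith [hr.2]
    have hru : ‖r • u - (1:ℝ) • u‖ = |r - 1| := by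
      rw [← sub_smul, norm_smul, Real.norm_eq_abs, hu, mul_one]
    have h1 : |φ (r • u) - φ ((1:ℝ) • u)| ≤ L * |r - 1| := by
      have := hφL (r • u) ((1:ℝ) • u)
      rwa [hru] at this
    have hpow : |r^(d-1)| ≤ 2^d := by
      rw [abs_of_nonneg (pow_nonneg hr0 _)]
      calc r^(d-1) ≤ 2^(d-1) := pow_le_pow_left₀ hr0 hr2 _
      _ ≤ 2^d := pow_le_pow_right₀ one_le_two (Nat.sub_le d 1)
    have hpow1 : |r^(d-1) - 1| ≤ d * 2^d * |r - 1| := by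
      calc |r^(d-1) - 1| ≤ (d-1 : ℕ) * 2^(d-1) * |r-1| := pow_near_one hr0 hr2
      _ ≤ d * 2^d * |r - 1| := by
          have h1 : ((d-1:ℕ):ℝ) ≤ (d:ℝ) := by
            exact_mod_cast Nat.cast_le.2 (Nat.sub_le d 1)
          have h2 : (2:ℝ)^(d-1) ≤ 2^d := pow_le_pow_right₀ one_le_two (Nat.sub_le d 1)
          have := abs_nonneg (r-1)
          have hd0 : (0:ℝ) ≤ ((d-1:ℕ):ℝ) := Nat.cast_nonneg _
          have h2d : (0:ℝ) ≤ 2^(d-1) := by positivity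
          exact mul_le_mul_of_nonneg_right
            (mul_le_mul h1 h2 h2d (Nat.cast_nonneg d)) (abs_nonneg _)
    have hφu : |φ ((1:ℝ) • u)| ≤ M := by
      refine hMb _ ?_
      rw [norm_smul, Real.norm_eq_abs, hu]; norm_num
    calc |r^(d-1) * φ (r • u) - 1^(d-1) * φ ((1:ℝ) • u)|
        = |r^(d-1) * (φ (r • u) - φ ((1:ℝ) • u)) + (r^(d-1) - 1) * φ ((1:ℝ) • u)| := by
          ring_nf
    _ ≤ |r^(d-1) * (φ (r • u) - φ ((1:ℝ) • u))| + |(r^(d-1) - 1) * φ ((1:ℝ) • u)| := abs_add_le _ _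
    _ = |r^(d-1)| * |φ (r • u) - φ ((1:ℝ) • u)| + |r^(d-1) - 1| * |φ ((1:ℝ) • u)| := by
          rw [abs_mul, abs_mul]
    _ ≤ 2^d * (L * |r-1|) + (d * 2^d * |r-1|) * M := by
          refine add_le_add (mul_le_mul hpow h1 (abs_nonneg _) (by positivity)) ?_
          exact mul_le_mul hpow1 hφu (abs_nonneg _) (by positivity)
    _ = K * |r - 1| := by rw [hKdef]; ring
  -- volume constants
  set V : ℝ := (volume (closedBall (0 : EuclideanSpace ℝ (Fin d)) 1)).toReal with hVdef
  have hVpos : (0:ℝ) < V := ENNReal.toReal_pos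
    (measure_closedBall_pos volume 0 one_pos).ne' measure_closedBall_lt_top.ne
  have hσuniv : (σ' univ).toReal = d * V := by
    rw [hσ', Measure.toSphere_apply_univ, ← Measure.addHaar_closedBall_eq_addHaar_ball,
      ENNReal.toReal_mul, ENNReal.toReal_natCast]
    rw [finrank_euclideanSpace_fin]
  -- fμ as an indicator integral
  have hsub : ∀ η : EuclideanSpace ℝ (Fin d),
      fμ (a + μ • η) = V⁻¹ * ∫ x, (closedBall η 1).indicator φ x := by
    intro η
    rw [hfμ, ballUniform, integral_smul_measure, ENNReal.toReal_inv, smul_eq_mul, ← hVdef]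
    congr 1
    have h1 : (fun v => f (a + μ • η + μ • v)) = fun v => φ (η + v) := by
      funext v; rw [hφ]; simp only; rw [smul_add, add_assoc]
    calc ∫ v in closedBall (0 : EuclideanSpace ℝ (Fin d)) 1, f (a + μ • η + μ • v)
        = ∫ v in closedBall (0 : EuclideanSpace ℝ (Fin d)) 1, φ (η + v) := by rw [h1]
    _ = ∫ v, (closedBall (0 : EuclideanSpace ℝ (Fin d)) 1).indicator (fun v => φ (η + v)) v :=
        (integral_indicator measurableSet_closedBall).symm
    _ = ∫ v, (closedBall η 1).indicator φ (η + v) := by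
        refine integral_congr_ae (Filter.Eventually.of_forall fun v => ?_)
        by_cases hv : v ∈ closedBall (0 : EuclideanSpace ℝ (Fin d)) 1
        · have hv' : η + v ∈ closedBall η 1 := by
            rw [mem_closedBall, dist_eq_norm, add_sub_cancel_left]
            rwa [mem_closedBall, dist_zero_right] at hv
          simp [Set.indicator_apply, hv, hv']
        · have hv' : η + v ∉ closedBall η 1 := by
            rw [mem_closedBall, dist_eq_norm, add_sub_cancel_left]
            rwa [mem_closedBall, dist_zero_right] at hv
          simp [Set.indicator_apply, hv, hv']
    _ = ∫ x, (closedBall η 1).indicator φ x :=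
        integral_add_left_eq_self ((closedBall η 1).indicator φ) η
  set A : EuclideanSpace ℝ (Fin d) → ℝ := fun η =>
    ∫ u : sphere (0 : EuclideanSpace ℝ (Fin d)) 1,
      (∫ r in (0:ℝ)..(rho η u.1), r^(d-1) * φ (r • u.1)) ∂σ' with hAdef
  have hsubA : ∀ η : EuclideanSpace ℝ (Fin d), ‖η‖ ≤ 1/4 → fμ (a + μ • η) = V⁻¹ * A η := by
    intro η hη
    rw [hsub η, (I_repr hd φ hφc η hη).1, hAdef]
  have hAint : ∀ η : EuclideanSpace ℝ (Fin d), ‖η‖ ≤ 1/4 →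
      Integrable (fun u : sphere (0 : EuclideanSpace ℝ (Fin d)) 1 =>
        ∫ r in (0:ℝ)..(rho η u.1), r^(d-1) * φ (r • u.1)) σ' :=
    fun η hη => (I_repr hd φ hφc η hη).2
  -- main estimate
  set Ctot : ℝ := (4*K + M) * (σ' univ).toReal with hCtotdef
  have hCtot0 : 0 ≤ Ctot := by positivity
  have hIφ : ∀ η : EuclideanSpace ℝ (Fin d),
      Integrable (fun u : sphere (0 : EuclideanSpace ℝ (Fin d)) 1 =>
        φ u.1 * ⟪u.1, η⟫) σ' := by
    intro η
    refine Integrable.mono' (integrable_const (M * ‖η‖))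
      (((hφc.comp continuous_subtype_val).mul
        (continuous_subtype_val.inner continuous_const)).aestronglyMeasurable)
      (Filter.Eventually.of_forall fun u => ?_)
    have hu : ‖u.1‖ = 1 := mem_sphere_zero_iff_norm.1 u.2
    rw [Real.norm_eq_abs, abs_mul]
    refine mul_le_mul (hMb u.1 (by rw [hu]; norm_num)) ?_ (abs_nonneg _) hM0
    calc |⟪u.1, η⟫| ≤ ‖u.1‖ * ‖η‖ := abs_real_inner_le_norm _ _
    _ = ‖η‖ := by rw [hu, one_mul]
  have hEst : ∀ η : EuclideanSpace ℝ (Fin d), ‖η‖ ≤ 1/4 →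
      |A η - A 0 - ∫ u : sphere (0 : EuclideanSpace ℝ (Fin d)) 1, φ u.1 * ⟪u.1, η⟫ ∂σ'|
        ≤ Ctot * ‖η‖^2 := by
    intro η hη
    have h0le : ‖(0 : EuclideanSpace ℝ (Fin d))‖ ≤ 1/4 := by simp
    have hdiff : A η - A 0 - (∫ u : sphere (0 : EuclideanSpace ℝ (Fin d)) 1, φ u.1 * ⟪u.1, η⟫ ∂σ')
        = ∫ u : sphere (0 : EuclideanSpace ℝ (Fin d)) 1,
            ((∫ r in (0:ℝ)..(rho η u.1), r^(d-1) * φ (r • u.1))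
              - (∫ r in (0:ℝ)..(rho 0 u.1), r^(d-1) * φ (r • u.1))
              - φ u.1 * ⟪u.1, η⟫) ∂σ' := by
      have hh1 : (∫ u : sphere (0 : EuclideanSpace ℝ (Fin d)) 1,
            ((∫ r in (0:ℝ)..(rho η u.1), r^(d-1) * φ (r • u.1))
              - (∫ r in (0:ℝ)..(rho 0 u.1), r^(d-1) * φ (r • u.1))
              - φ u.1 * ⟪u.1, η⟫) ∂σ')
          = (∫ u : sphere (0 : EuclideanSpace ℝ (Fin d)) 1,
              ((∫ r in (0:ℝ)..(rho η u.1), r^(d-1) * φ (r • u.1))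
                - (∫ r in (0:ℝ)..(rho 0 u.1), r^(d-1) * φ (r • u.1))) ∂σ')
            - ∫ u : sphere (0 : EuclideanSpace ℝ (Fin d)) 1, φ u.1 * ⟪u.1, η⟫ ∂σ' :=
        integral_sub (Integrable.sub (hAint η hη) (hAint 0 h0le)) (hIφ η)
      have hh2 : (∫ u : sphere (0 : EuclideanSpace ℝ (Fin d)) 1,
            ((∫ r in (0:ℝ)..(rho η u.1), r^(d-1) * φ (r • u.1))
              - (∫ r in (0:ℝ)..(rho 0 u.1), r^(d-1) * φ (r • u.1))) ∂σ')
          = A η - A 0 := integral_sub (hAint η hη) (hAint 0 h0le)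
      rw [hh1, hh2]
    rw [hdiff]
    have hptwise : ∀ u : sphere (0 : EuclideanSpace ℝ (Fin d)) 1,
        ‖(∫ r in (0:ℝ)..(rho η u.1), r^(d-1) * φ (r • u.1))
          - (∫ r in (0:ℝ)..(rho 0 u.1), r^(d-1) * φ (r • u.1))
          - φ u.1 * ⟪u.1, η⟫‖ ≤ (4*K + M) * ‖η‖^2 := by
      intro u
      have hu : ‖u.1‖ = 1 := mem_sphere_zero_iff_norm.1 u.2
      obtain ⟨h1, h2, _⟩ := rho_facts hη hu
      have hρIcc : rho η u.1 ∈ Icc (1/2 : ℝ) (3/2) := by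
        have := abs_le.1 h2
        constructor <;> [linarith [this.1]; linarith [this.2]]
      have hψc : Continuous (fun r : ℝ => r^(d-1) * φ (r • u.1)) := by
        exact (continuous_pow _).mul (hφc.comp (continuous_id.smul continuous_const))
      have hftc := ftc_bound hψc (hψK u.1 hu) hρIcc
      have hψ1 : (1:ℝ)^(d-1) * φ ((1:ℝ) • u.1) = φ u.1 := by rw [one_pow, one_smul, one_mul]
      rw [rho_zero u.1]
      rw [Real.norm_eq_abs]
      have hsq : (rho η u.1 - 1)^2 ≤ (2*‖η‖)^2 := by
        have h2' := abs_le.1 h2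
        exact sq_le_sq' h2'.1 h2'.2
      have hφuM : |φ u.1| ≤ M := hMb u.1 (by rw [hu]; norm_num)
      have hstep1 : |(∫ r in (0:ℝ)..(rho η u.1), r^(d-1) * φ (r • u.1))
          - (∫ r in (0:ℝ)..(1:ℝ), r^(d-1) * φ (r • u.1))
          - φ u.1 * (rho η u.1 - 1)| ≤ 4 * K * ‖η‖^2 := by
        rw [← hψ1]
        calc |(∫ r in (0:ℝ)..(rho η u.1), r^(d-1) * φ (r • u.1))
            - (∫ r in (0:ℝ)..(1:ℝ), r^(d-1) * φ (r • u.1))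
            - (1:ℝ)^(d-1) * φ ((1:ℝ) • u.1) * (rho η u.1 - 1)| ≤ K * (rho η u.1 - 1)^2 :=
              hftc
        _ ≤ K * (2*‖η‖)^2 := mul_le_mul_of_nonneg_left hsq hK0
        _ = 4 * K * ‖η‖^2 := by ring
      have hstep2 : |φ u.1 * (rho η u.1 - 1) - φ u.1 * ⟪u.1, η⟫| ≤ M * ‖η‖^2 := by
        rw [← mul_sub, abs_mul]
        exact mul_le_mul hφuM h1 (abs_nonneg _) hM0
      calc |(∫ r in (0:ℝ)..(rho η u.1), r^(d-1) * φ (r • u.1))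
          - (∫ r in (0:ℝ)..(1:ℝ), r^(d-1) * φ (r • u.1))
          - φ u.1 * ⟪u.1, η⟫|
          = |((∫ r in (0:ℝ)..(rho η u.1), r^(d-1) * φ (r • u.1))
            - (∫ r in (0:ℝ)..(1:ℝ), r^(d-1) * φ (r • u.1))
            - φ u.1 * (rho η u.1 - 1))
            + (φ u.1 * (rho η u.1 - 1) - φ u.1 * ⟪u.1, η⟫)| := by congr 1; ring
      _ ≤ |(∫ r in (0:ℝ)..(rho η u.1), r^(d-1) * φ (r • u.1))
            - (∫ r in (0:ℝ)..(1:ℝ), r^(d-1) * φ (r • u.1))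
            - φ u.1 * (rho η u.1 - 1)|
            + |φ u.1 * (rho η u.1 - 1) - φ u.1 * ⟪u.1, η⟫| := abs_add_le _ _
      _ ≤ 4 * K * ‖η‖^2 + M * ‖η‖^2 := add_le_add hstep1 hstep2
      _ = (4*K + M) * ‖η‖^2 := by ring
    calc |∫ u : sphere (0 : EuclideanSpace ℝ (Fin d)) 1,
          ((∫ r in (0:ℝ)..(rho η u.1), r^(d-1) * φ (r • u.1))
            - (∫ r in (0:ℝ)..(rho 0 u.1), r^(d-1) * φ (r • u.1))
            - φ u.1 * ⟪u.1, η⟫) ∂σ'|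
        ≤ (4*K + M) * ‖η‖^2 * (σ' univ).toReal :=
          norm_integral_le_of_norm_le_const (Filter.Eventually.of_forall hptwise)
    _ = Ctot * ‖η‖^2 := by rw [hCtotdef]; ring
  -- the gradient pairing
  have hS : Integrable (fun u : sphere (0 : EuclideanSpace ℝ (Fin d)) 1 =>
      φ u.1 • u.1) σ' := by
    refine Integrable.mono' (integrable_const M)
      (((hφc.comp continuous_subtype_val).smul continuous_subtype_val).aestronglyMeasurable)
      (Filter.Eventually.of_forall fun u => ?_)
    have hu : ‖u.1‖ = 1 := mem_sphere_zero_iff_norm.1 u.2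
    rw [norm_smul, Real.norm_eq_abs, hu, mul_one]
    exact hMb u.1 (by rw [hu]; norm_num)
  have hGw : ∀ η : EuclideanSpace ℝ (Fin d),
      ⟪(((d : ℝ) / μ) •
          ∫ u, f (a + μ • (u : EuclideanSpace ℝ (Fin d))) • (u : EuclideanSpace ℝ (Fin d))
            ∂(sphereUniform d)), μ • η⟫
        = V⁻¹ * ∫ u : sphere (0 : EuclideanSpace ℝ (Fin d)) 1, φ u.1 * ⟪u.1, η⟫ ∂σ' := by
    intro η
    have hint1 : (∫ u, f (a + μ • (u : EuclideanSpace ℝ (Fin d))) • (u : EuclideanSpace ℝ (Fin d))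
        ∂(sphereUniform d)) = ((σ' univ)⁻¹).toReal •
          ∫ u : sphere (0 : EuclideanSpace ℝ (Fin d)) 1, φ u.1 • u.1 ∂σ' := by
      rw [sphereUniform, integral_smul_measure]
    rw [hint1, real_inner_smul_left, real_inner_smul_left]
    have hSw : ⟪(∫ u : sphere (0 : EuclideanSpace ℝ (Fin d)) 1, φ u.1 • u.1 ∂σ'), μ • η⟫
        = μ * ∫ u : sphere (0 : EuclideanSpace ℝ (Fin d)) 1, φ u.1 * ⟪u.1, η⟫ ∂σ' := by
      rw [real_inner_comm, ← integral_inner hS]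
      rw [show (fun u : sphere (0 : EuclideanSpace ℝ (Fin d)) 1 => ⟪μ • η, φ u.1 • u.1⟫)
          = fun u : sphere (0 : EuclideanSpace ℝ (Fin d)) 1 => μ * (φ u.1 * ⟪u.1, η⟫) from ?_]
      · exact integral_const_mul μ _
      · funext u
        rw [real_inner_smul_right, real_inner_smul_left, real_inner_comm]
        ring
    rw [hSw, ENNReal.toReal_inv, hσuniv]
    have hd0 : (0:ℝ) < (d:ℝ) := by exact_mod_cast Nat.pos_of_ne_zero (by omega)
    field_simp
  -- conclusion
  rw [hasGradientAt_iff_isLittleO_nhds_zero, Asymptotics.isLittleO_iff]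
  intro c hc
  set C' : ℝ := V⁻¹ * Ctot * (μ⁻¹)^2 with hC'def
  have hC'0 : 0 ≤ C' := by positivity
  rw [Metric.eventually_nhds_iff]
  refine ⟨min (μ/4) (c/(C'+1)), by positivity, fun {w} hwd => ?_⟩
  rw [dist_zero_right] at hwd
  have hw4 : ‖w‖ ≤ μ/4 := le_of_lt (lt_of_lt_of_le hwd (min_le_left _ _))
  have hwc : ‖w‖ ≤ c/(C'+1) := le_of_lt (lt_of_lt_of_le hwd (min_le_right _ _))
  set η : EuclideanSpace ℝ (Fin d) := μ⁻¹ • w with hηdef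
  have hweq : μ • η = w := smul_inv_smul₀ hμ.ne' w
  have hηn : ‖η‖ = μ⁻¹ * ‖w‖ := by
    rw [hηdef, norm_smul, Real.norm_eq_abs, abs_of_pos (inv_pos.2 hμ)]
  have hη4 : ‖η‖ ≤ 1/4 := by
    rw [hηn]
    calc μ⁻¹ * ‖w‖ ≤ μ⁻¹ * (μ/4) := by
          exact mul_le_mul_of_nonneg_left hw4 (inv_pos.2 hμ).le
    _ = 1/4 := by field_simp
  have e1 : fμ (a + w) = V⁻¹ * A η := by rw [← hweq]; exact hsubA η hη4
  have e2 : fμ a = V⁻¹ * A 0 := by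
    have := hsubA 0 (by simp)
    simpa using this
  have e3 : ⟪(((d : ℝ) / μ) •
      ∫ u, f (a + μ • (u : EuclideanSpace ℝ (Fin d))) • (u : EuclideanSpace ℝ (Fin d))
        ∂(sphereUniform d)), w⟫
      = V⁻¹ * ∫ u : sphere (0 : EuclideanSpace ℝ (Fin d)) 1, φ u.1 * ⟪u.1, η⟫ ∂σ' := by
    rw [← hweq]; exact hGw η
  rw [e1, e2, e3]
  have hfact : V⁻¹ * A η - V⁻¹ * A 0 - V⁻¹ *
      (∫ u : sphere (0 : EuclideanSpace ℝ (Fin d)) 1, φ u.1 * ⟪u.1, η⟫ ∂σ')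
      = V⁻¹ * (A η - A 0 -
        ∫ u : sphere (0 : EuclideanSpace ℝ (Fin d)) 1, φ u.1 * ⟪u.1, η⟫ ∂σ') := by ring
  rw [Real.norm_eq_abs, hfact, abs_mul, abs_of_pos (inv_pos.2 hVpos)]
  calc V⁻¹ * |A η - A 0 - ∫ u : sphere (0 : EuclideanSpace ℝ (Fin d)) 1, φ u.1 * ⟪u.1, η⟫ ∂σ'|
      ≤ V⁻¹ * (Ctot * ‖η‖^2) := mul_le_mul_of_nonneg_left (hEst η hη4) (inv_pos.2 hVpos).le
  _ = C' * ‖w‖^2 := by rw [hC'def, hηn]; ring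
  _ ≤ C' * ((c/(C'+1)) * ‖w‖) := by
      rw [sq]
      exact mul_le_mul_of_nonneg_left
        (mul_le_mul_of_nonneg_right hwc (norm_nonneg w)) hC'0
  _ ≤ c * ‖w‖ := by
      have hpos : (0:ℝ) < C' + 1 := by linarith
      have h1 : C' * (c/(C'+1)) ≤ c := by
        rw [div_eq_mul_inv, ← mul_assoc, mul_comm C' c, mul_assoc]
        calc c * (C' * (C'+1)⁻¹) ≤ c * 1 := by
              refine mul_le_mul_of_nonneg_left ?_ hc.le
              rw [mul_inv_le_iff₀ hpos]; linarith
        _ = c := mul_one c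
      calc C' * (c/(C'+1) * ‖w‖) = (C' * (c/(C'+1))) * ‖w‖ := by ring
      _ ≤ c * ‖w‖ := mul_le_mul_of_nonneg_right h1 (norm_nonneg w)
end
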